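/- Let g ≥ 1 and P, Q ∈ ℂ^g, let C = C(P) be the companion matrix of p(x) = x^g − Σ_{k=1}^g P_k x^{k−1}, let r₁, r₂ ∈ ℂ[x], let H ∈ ℂ^g, and let r₃(x) = Σ_{k=1}^g H_k x^{k−1}. Suppose p has g pairwise distinct roots ξ_1, …, ξ_g ∈ ℂ, that for every j = 1, …, g one has r₁(ξ_j)·(Υ(ξ_j) ⬝ Q) + ξ_j^g·r₂(ξ_j) + r₃(ξ_j) = 0, and that the matrix r₁(C) is invertible. Then Q = −(r₁(C))^{−1}(H + r₂(C) P). -/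

import Mathlib

open Matrix Polynomial

/-- The companion matrix of the polynomial `x^g - ∑_{k=1}^g P_k x^{k-1}`
(0-indexed: entries `C i j = (1 if j+1 = i else 0) + (P i if j = g-1 else 0)`). -/
noncomputable def companionMat (g : ℕ) (P : Fin g → ℂ) : Matrix (Fin g) (Fin g) ℂ :=
  fun i j => (if (j : ℕ) + 1 = (i : ℕ) then 1 else 0) + (if (j : ℕ) = g - 1 then P i else 0)

/-- The vector `Υ(ξ) = (1, ξ, ξ², …, ξ^{g-1})`. -/
noncomputable def ups (g : ℕ) (ξ : ℂ) : Fin g → ℂ := fun i => ξ ^ (i : ℕ)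

lemma ups_vecMul_companion (g : ℕ) (P : Fin g → ℂ) (ξ : ℂ)
    (hroot : ξ ^ g = ∑ k : Fin g, P k * ξ ^ (k : ℕ)) :
    ups g ξ ᵥ* companionMat g P = ξ • ups g ξ := by
  funext j
  simp only [vecMul, dotProduct, companionMat, ups, Pi.smul_apply, smul_eq_mul,
    mul_add, Finset.sum_add_distrib, mul_ite, mul_one, mul_zero]
  by_cases hj : (j : ℕ) = g - 1
  · have h1 : ∀ i : Fin g, ¬ ((j : ℕ) + 1 = (i : ℕ)) := by
      intro i h
      have := i.isLt
      omega
    rw [Finset.sum_eq_zero (fun i _ => by rw [if_neg (h1 i)]), zero_add]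
    simp only [hj, if_true]
    have hx : ξ * ξ ^ (g - 1) = ξ ^ g := by
      rw [← pow_succ']
      congr 1
      have := j.isLt
      omega
    rw [hx, hroot]
    exact Finset.sum_congr rfl fun i _ => mul_comm _ _
  · have hjlt : (j : ℕ) + 1 < g := by have := j.isLt; omega
    simp only [hj, if_false, Finset.sum_const_zero, add_zero]
    rw [Finset.sum_eq_single (⟨(j : ℕ) + 1, hjlt⟩ : Fin g)]
    · simp [pow_succ, mul_comm]
    · intro i _ hi
      rw [if_neg]
      intro h
      exact hi (Fin.ext h.symm)
    · intro h
      exact absurd (Finset.mem_univ _) h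

lemma ups_vecMul_pow (g : ℕ) (P : Fin g → ℂ) (ξ : ℂ)
    (hroot : ξ ^ g = ∑ k : Fin g, P k * ξ ^ (k : ℕ)) (n : ℕ) :
    ups g ξ ᵥ* (companionMat g P) ^ n = ξ ^ n • ups g ξ := by
  induction n with
  | zero => simp
  | succ n ih =>
    rw [pow_succ, ← vecMul_vecMul, ih, smul_vecMul, ups_vecMul_companion g P ξ hroot,
      smul_smul, pow_succ]

lemma ups_vecMul_aeval (g : ℕ) (P : Fin g → ℂ) (ξ : ℂ)
    (hroot : ξ ^ g = ∑ k : Fin g, P k * ξ ^ (k : ℕ)) (r : Polynomial ℂ) :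
    ups g ξ ᵥ* (Polynomial.aeval (companionMat g P) r) = r.eval ξ • ups g ξ := by
  induction r using Polynomial.induction_on' with
  | add p q hp hq => rw [map_add, vecMul_add, hp, hq, eval_add, add_smul]
  | monomial n a =>
    rw [aeval_monomial, eval_monomial]
    rw [show (algebraMap ℂ (Matrix (Fin g) (Fin g) ℂ)) a * (companionMat g P) ^ n
        = a • (companionMat g P) ^ n from ?_]
    · have hsm : ups g ξ ᵥ* (a • (companionMat g P) ^ n)
          = a • (ups g ξ ᵥ* (companionMat g P) ^ n) := by
        ext i
        simp [vecMul, dotProduct, Finset.mul_sum, mul_left_comm]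
      rw [hsm, ups_vecMul_pow g P ξ hroot, smul_smul]
    · rw [Algebra.algebraMap_eq_smul_one, smul_mul_assoc, one_mul]

theorem odd_coordinates_of_sum (g : ℕ) (hg : 1 ≤ g) (P Q : Fin g → ℂ)
    (C : Matrix (Fin g) (Fin g) ℂ) (hC : C = companionMat g P)
    (r₁ r₂ : Polynomial ℂ) (H : Fin g → ℂ)
    (ξ : Fin g → ℂ) (hdist : Function.Injective ξ)
    (hroot : ∀ j : Fin g, ξ j ^ g = ∑ k : Fin g, P k * ξ j ^ (k : ℕ))
    (hvanish : ∀ j : Fin g,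
      r₁.eval (ξ j) * (ups g (ξ j) ⬝ᵥ Q) + ξ j ^ g * r₂.eval (ξ j)
        + (∑ k : Fin g, H k * ξ j ^ (k : ℕ)) = 0)
    (hinv : IsUnit (Polynomial.aeval C r₁)) :
    Q = -((Polynomial.aeval C r₁)⁻¹.mulVec (H + (Polynomial.aeval C r₂).mulVec P)) := by
  subst hC
  set A := companionMat g P
  set v : Fin g → ℂ :=
    (Polynomial.aeval A r₁).mulVec Q + (H + (Polynomial.aeval A r₂).mulVec P) with hv
  have hv0 : v = 0 := by
    apply Matrix.eq_zero_of_forall_index_sum_pow_mul_eq_zero hdist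
    intro j
    have key : ups g (ξ j) ⬝ᵥ v = 0 := by
      rw [hv]
      rw [dotProduct_add, dotProduct_add, dotProduct_mulVec, dotProduct_mulVec,
        ups_vecMul_aeval g P (ξ j) (hroot j) r₁, ups_vecMul_aeval g P (ξ j) (hroot j) r₂,
        smul_dotProduct, smul_dotProduct]
      have h1 : ups g (ξ j) ⬝ᵥ P = ξ j ^ g := by
        rw [hroot j]
        simp [dotProduct, ups, mul_comm]
      have h2 : ups g (ξ j) ⬝ᵥ H = ∑ k : Fin g, H k * ξ j ^ (k : ℕ) := by
        simp [dotProduct, ups, mul_comm]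
      rw [h1, h2, smul_eq_mul, smul_eq_mul]
      have := hvanish j
      ring_nf
      ring_nf at this
      linear_combination (norm := ring_nf) this
    simpa [dotProduct, ups] using key
  have hmul : (Polynomial.aeval A r₁).mulVec Q = -(H + (Polynomial.aeval A r₂).mulVec P) := by
    have := hv0
    rw [hv] at this
    rw [eq_neg_iff_add_eq_zero]
    exact this
  have hd : IsUnit (Polynomial.aeval A r₁).det := (Matrix.isUnit_iff_isUnit_det _).mp hinv
  calc Q = ((Polynomial.aeval A r₁)⁻¹ * (Polynomial.aeval A r₁)).mulVec Q := by
        rw [Matrix.nonsing_inv_mul _ hd, Matrix.one_mulVec]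
    _ = (Polynomial.aeval A r₁)⁻¹.mulVec ((Polynomial.aeval A r₁).mulVec Q) := by
        rw [← Matrix.mulVec_mulVec]
    _ = -((Polynomial.aeval A r₁)⁻¹.mulVec (H + (Polynomial.aeval A r₂).mulVec P)) := by
        rw [hmul, Matrix.mulVec_neg]
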